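/- arXiv:0705.3362 — 5 statements merged into one kernel-verified Lean document; each statement's English description precedes it below -/
import Mathlib

section
/- Let θ ∈ (0, 1/2), C > 0, and t₀ ≥ 0. Suppose y : ℝ → ℝ is differentiable on [t₀, ∞), with y(t) ≥ 0 and y'(t) + C · y(t)^{2(1-θ)} ≤ 0 for all t ≥ t₀. Then there exists a constant C' > 0 such that y(t) ≤ C' (1 + t)^{-1/(1-2θ)} for all t ≥ t₀. -/
/-- If `θ ∈ (0, 1/2)`, `C > 0`, `t₀ ≥ 0` and `y` is a nonnegative
differentiable function on `[t₀, ∞)` satisfying `y' + C y^{2(1-θ)} ≤ 0` there, then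
`y(t) ≤ C' (1+t)^{-1/(1-2θ)}` for all `t ≥ t₀`, for some constant `C' > 0`. -/
theorem decay_of_differential_inequality
    (θ C t₀ : ℝ) (hθ : θ ∈ Set.Ioo (0:ℝ) (1/2)) (hC : 0 < C) (ht₀ : 0 ≤ t₀)
    (y y' : ℝ → ℝ)
    (hderiv : ∀ t ∈ Set.Ici t₀, HasDerivAt y (y' t) t)
    (hy : ∀ t ∈ Set.Ici t₀, 0 ≤ y t)
    (hineq : ∀ t ∈ Set.Ici t₀, y' t + C * (y t) ^ (2 * (1 - θ)) ≤ 0) :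
    ∃ C' : ℝ, 0 < C' ∧ ∀ t ∈ Set.Ici t₀, y t ≤ C' * (1 + t) ^ (-(1 / (1 - 2 * θ))) := by
  obtain ⟨hθ0, hθh⟩ := hθ
  set α : ℝ := 1 - 2 * θ with hαdef
  have hα0 : 0 < α := by simp only [hαdef]; linarith
  have hexp : 2 * (1 - θ) = 1 + α := by simp only [hαdef]; ring
  -- y' is nonpositive on [t₀, ∞)
  have hy'le : ∀ t ∈ Set.Ici t₀, y' t ≤ -(C * (y t) ^ (2 * (1 - θ))) := by
    intro t ht; linarith [hineq t ht]
  have hy'0 : ∀ t ∈ Set.Ici t₀, y' t ≤ 0 := by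
    intro t ht
    have := hy'le t ht
    have h1 : 0 ≤ C * (y t) ^ (2 * (1 - θ)) :=
      mul_nonneg hC.le (Real.rpow_nonneg (hy t ht) _)
    linarith
  have hcont : ContinuousOn y (Set.Ici t₀) := fun t ht =>
    (hderiv t ht).continuousAt.continuousWithinAt
  have hanti : AntitoneOn y (Set.Ici t₀) := by
    apply antitoneOn_of_deriv_nonpos (convex_Ici t₀) hcont
    · intro t ht
      rw [interior_Ici] at ht
      exact (hderiv t (Set.mem_Ici.2 (Set.mem_Ioi.1 ht).le)).differentiableAt.differentiableWithinAt
    · intro t ht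
      rw [interior_Ici] at ht
      rw [(hderiv t (Set.mem_Ici.2 (Set.mem_Ioi.1 ht).le)).deriv]
      exact hy'0 t (Set.mem_Ici.2 (Set.mem_Ioi.1 ht).le)
  -- key estimate when y t > 0
  have key : ∀ t ∈ Set.Ici t₀, 0 < y t → α * C * (t - t₀) ≤ (y t) ^ (-α) := by
    intro t ht hpos
    have hypos : ∀ s ∈ Set.Icc t₀ t, 0 < y s := by
      intro s hs
      exact lt_of_lt_of_le hpos (hanti (Set.mem_Ici.2 hs.1) ht hs.2)
    -- g s = y s ^ (-α) - α * C * s is monotone on [t₀, t]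
    set g : ℝ → ℝ := fun s => (y s) ^ (-α) - α * C * s with hg
    have hmono : MonotoneOn g (Set.Icc t₀ t) := by
      apply monotoneOn_of_deriv_nonneg (convex_Icc t₀ t)
      · apply ContinuousOn.sub
        · apply ContinuousOn.rpow_const (hcont.mono (Set.Icc_subset_Ici_self))
          intro s hs; exact Or.inl (ne_of_gt (hypos s hs))
        · exact (continuous_const.mul continuous_id).continuousOn
      · intro s hs
        rw [interior_Icc] at hs
        have hs' : s ∈ Set.Ici t₀ := Set.mem_Ici.2 hs.1.le
        have h1 : HasDerivAt (fun s => (y s) ^ (-α)) (y' s * (-α) * (y s) ^ (-α - 1)) s :=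
          (hderiv s hs').rpow_const (Or.inl (ne_of_gt (hypos s ⟨hs.1.le, hs.2.le⟩)))
        exact ((h1.sub ((hasDerivAt_id s).const_mul (α * C)))).differentiableAt.differentiableWithinAt
      · intro s hs
        rw [interior_Icc] at hs
        have hs' : s ∈ Set.Ici t₀ := Set.mem_Ici.2 hs.1.le
        have hyspos : 0 < y s := hypos s ⟨hs.1.le, hs.2.le⟩
        have h1 : HasDerivAt (fun s => (y s) ^ (-α)) (y' s * (-α) * (y s) ^ (-α - 1)) s :=
          (hderiv s hs').rpow_const (Or.inl (ne_of_gt hyspos))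
        have h2 : HasDerivAt g (y' s * (-α) * (y s) ^ (-α - 1) - α * C * 1) s :=
          h1.sub ((hasDerivAt_id s).const_mul (α * C))
        rw [h2.deriv]
        have h3 : y' s ≤ -(C * (y s) ^ (1 + α)) := by
          have := hy'le s hs'; rwa [hexp] at this
        have h4 : 0 < (y s) ^ (-α - 1) := Real.rpow_pos_of_pos hyspos _
        have h5 : (y s) ^ (1 + α) * (y s) ^ (-α - 1) = 1 := by
          rw [← Real.rpow_add hyspos]
          have : 1 + α + (-α - 1) = 0 := by ring
          rw [this, Real.rpow_zero]
        have h6 : y' s * (-α) * (y s) ^ (-α - 1) ≥ α * C := by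
          have : (-(C * (y s) ^ (1 + α))) * (-α) * (y s) ^ (-α - 1) = α * C := by
            have : C * ((y s) ^ (1 + α) * (y s) ^ (-α - 1)) * α = α * C := by
              rw [h5]; ring
            nlinarith [this]
          nlinarith [mul_le_mul_of_nonneg_right
            (mul_le_mul_of_nonpos_right h3 (by linarith : (-α : ℝ) ≤ 0)) h4.le]
        linarith
    have h7 := hmono (Set.left_mem_Icc.2 ((Set.mem_Ici.1 ht))) (Set.right_mem_Icc.2 (Set.mem_Ici.1 ht)) (Set.mem_Ici.1 ht)
    have h8 : 0 ≤ (y t₀) ^ (-α) := Real.rpow_nonneg (hy t₀ (Set.mem_Ici.2 le_rfl)) _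
    simp only [hg] at h7
    linarith
  -- the constant
  set K : ℝ := (2 + t₀) ^ (1 / α) with hK
  have hKpos : 0 < K := Real.rpow_pos_of_pos (by linarith) _
  set B : ℝ := (α * C) ^ (-(1 / α)) with hB
  have hBpos : 0 < B := Real.rpow_pos_of_pos (mul_pos hα0 hC) _
  have hy0 : 0 ≤ y t₀ := hy t₀ (Set.mem_Ici.2 le_rfl)
  refine ⟨K * (y t₀ + B) + 1, by positivity, ?_⟩
  intro t ht
  have ht' := Set.mem_Ici.1 ht
  have h1t : (0:ℝ) < 1 + t := by linarith
  have hrpos : 0 < (1 + t) ^ (-(1 / α)) := Real.rpow_pos_of_pos h1t _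
  rcases le_or_gt (y t) 0 with hyt | hyt
  · have : y t = 0 := le_antisymm hyt (hy t ht)
    rw [this]
    positivity
  rcases le_or_gt t (t₀ + 1) with hcase | hcase
  · -- small time: use y t ≤ y t₀ and comparability of (1+t)^{-1/α} with constant
    have hy_le : y t ≤ y t₀ := hanti (Set.mem_Ici.2 le_rfl) ht ht'
    have h2 : (2 + t₀) ^ (-(1 / α)) ≤ (1 + t) ^ (-(1 / α)) :=
      Real.rpow_le_rpow_of_nonpos h1t (by linarith)
        (by simp only [neg_nonpos]; positivity)
    have h3 : K * (2 + t₀) ^ (-(1 / α)) = 1 := by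
      rw [hK, ← Real.rpow_add (by linarith : (0:ℝ) < 2 + t₀)]
      norm_num
    have h4 : K * y t₀ * (2 + t₀) ^ (-(1 / α)) = y t₀ := by
      rw [mul_comm K (y t₀), mul_assoc, h3, mul_one]
    calc y t ≤ y t₀ := hy_le
      _ = K * y t₀ * (2 + t₀) ^ (-(1 / α)) := h4.symm
      _ ≤ (K * (y t₀ + B) + 1) * (1 + t) ^ (-(1 / α)) := by
          apply mul_le_mul _ h2 (by positivity) (by positivity)
          nlinarith [hKpos, hBpos]
  · -- large time: use the key estimate
    have htt : (1:ℝ) ≤ t - t₀ := by linarith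
    have httpos : (0:ℝ) < t - t₀ := by linarith
    have hb : 0 < α * C * (t - t₀) := by positivity
    have hk := key t ht hyt
    -- y t ≤ (α C (t - t₀))^{-1/α}
    have h5 : y t ≤ (α * C * (t - t₀)) ^ (-(1 / α)) := by
      have h6 : ((y t) ^ (-α)) ^ (-(1 / α)) ≤ (α * C * (t - t₀)) ^ (-(1 / α)) :=
        Real.rpow_le_rpow_of_nonpos hb hk (by simp only [neg_nonpos]; positivity)
      have h7 : ((y t) ^ (-α)) ^ (-(1 / α)) = y t := by
        rw [← Real.rpow_mul hyt.le]
        have : -α * -(1 / α) = 1 := by field_simp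
        rw [this, Real.rpow_one]
      rwa [h7] at h6
    have h8 : (α * C * (t - t₀)) ^ (-(1 / α)) = B * (t - t₀) ^ (-(1 / α)) := by
      rw [hB, ← Real.mul_rpow (by positivity) httpos.le]
    have h9 : (1 + t) ≤ (2 + t₀) * (t - t₀) := by nlinarith
    have h10 : ((2 + t₀) * (t - t₀)) ^ (-(1 / α)) ≤ (1 + t) ^ (-(1 / α)) :=
      Real.rpow_le_rpow_of_nonpos h1t h9 (by simp only [neg_nonpos]; positivity)
    have h11 : ((2 + t₀) * (t - t₀)) ^ (-(1 / α)) = (2 + t₀) ^ (-(1 / α)) * (t - t₀) ^ (-(1 / α)) :=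
      Real.mul_rpow (by linarith) httpos.le
    have h12 : K * (2 + t₀) ^ (-(1 / α)) = 1 := by
      rw [hK, ← Real.rpow_add (by linarith : (0:ℝ) < 2 + t₀)]
      norm_num
    have h13 : (t - t₀) ^ (-(1 / α)) ≤ K * (1 + t) ^ (-(1 / α)) := by
      have := mul_le_mul_of_nonneg_left (h11 ▸ h10) hKpos.le
      rwa [← mul_assoc, h12, one_mul] at this
    calc y t ≤ B * (t - t₀) ^ (-(1 / α)) := by rw [← h8]; exact h5
      _ ≤ B * (K * (1 + t) ^ (-(1 / α))) := by
          exact mul_le_mul_of_nonneg_left h13 hBpos.le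
      _ ≤ (K * (y t₀ + B) + 1) * (1 + t) ^ (-(1 / α)) := by
          nlinarith [hrpos, hKpos, hBpos, mul_nonneg (mul_nonneg hKpos.le hy0) hrpos.le]
end

section
/- Let γ > 0, C ≥ 0, a > 0. Suppose y : ℝ → ℝ is differentiable on [1, ∞), with y(t) ≥ 0 and y'(t) + γ y(t) ≤ C (1 + t)^{-a} for all t ≥ 1. Then there exists a constant C' > 0 such that y(t) ≤ C' (1 + t)^{-a} for all t ≥ 1. -/
/-- Gronwall-type estimate with polynomially decaying forcing: if
`γ > 0`, `C ≥ 0`, `a > 0` and `y` is a nonnegative differentiable function on `[1, ∞)`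
with `y' + γ y ≤ C (1+t)^{-a}` there, then `y(t) ≤ C' (1+t)^{-a}` on `[1, ∞)`
for some constant `C' > 0`. -/
theorem gronwall_polynomial_forcing
    (γ C a : ℝ) (hγ : 0 < γ) (hC : 0 ≤ C) (ha : 0 < a)
    (y y' : ℝ → ℝ)
    (hderiv : ∀ t ∈ Set.Ici (1:ℝ), HasDerivAt y (y' t) t)
    (hy : ∀ t ∈ Set.Ici (1:ℝ), 0 ≤ y t)
    (hineq : ∀ t ∈ Set.Ici (1:ℝ), y' t + γ * y t ≤ C * (1 + t) ^ (-a)) :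
    ∃ C' : ℝ, 0 < C' ∧ ∀ t ∈ Set.Ici (1:ℝ), y t ≤ C' * (1 + t) ^ (-a) := by
  obtain ⟨T, hT1, hTa⟩ : ∃ T : ℝ, 1 ≤ T ∧ 2 * a / γ ≤ T :=
    ⟨max 1 (2 * a / γ), le_max_left _ _, le_max_right _ _⟩
  -- bound y on [1, T]
  have hcont : ContinuousOn y (Set.Icc 1 T) := fun t ht =>
    ((hderiv t ht.1).continuousAt).continuousWithinAt
  obtain ⟨K, hK⟩ := (isCompact_Icc).exists_bound_of_continuousOn hcont
  obtain ⟨M, hM1, hM2, hM0⟩ :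
      ∃ M : ℝ, 2 * C / γ ≤ M ∧ max K 0 * (1 + T) ^ a ≤ M ∧ 0 < M := by
    refine ⟨max (2 * C / γ) (max K 0 * (1 + T) ^ a) + 1, ?_, ?_, ?_⟩
    · linarith [le_max_left (2 * C / γ) (max K 0 * (1 + T) ^ a)]
    · linarith [le_max_right (2 * C / γ) (max K 0 * (1 + T) ^ a)]
    · have : (0:ℝ) ≤ 2 * C / γ := by positivity
      linarith [le_max_left (2 * C / γ) (max K 0 * (1 + T) ^ a)]
  have hbase : ∀ t : ℝ, 1 ≤ t → (0:ℝ) < 1 + t := fun t ht => by linarith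
  have hTpos : (0:ℝ) < 1 + T := hbase T hT1
  -- Claim 1 : the bound on [1, T]
  have claim1 : ∀ t ∈ Set.Icc (1:ℝ) T, y t ≤ M * (1 + t) ^ (-a) := by
    intro t ht
    have htpos : (0:ℝ) < 1 + t := hbase t ht.1
    have h1 : y t ≤ max K 0 := le_trans (le_trans (le_abs_self _) (hK t ht)) (le_max_left _ _)
    have h2 : (1 + T) ^ (-a) ≤ (1 + t) ^ (-a) :=
      Real.rpow_le_rpow_of_nonpos htpos (by linarith [ht.2]) (by linarith)
    have h3 : (1 + T) ^ a * (1 + T) ^ (-a) = 1 := by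
      rw [← Real.rpow_add hTpos]; simp
    have hk0 : (0:ℝ) ≤ max K 0 := le_max_right _ _
    have hTa0 : (0:ℝ) ≤ (1 + T) ^ a := (Real.rpow_pos_of_pos hTpos a).le
    have h4 : max K 0 * (1 + T) ^ a * (1 + T) ^ (-a) ≤
        max K 0 * (1 + T) ^ a * (1 + t) ^ (-a) :=
      mul_le_mul_of_nonneg_left h2 (mul_nonneg hk0 hTa0)
    have h5 : max K 0 * (1 + T) ^ a * (1 + t) ^ (-a) ≤ M * (1 + t) ^ (-a) :=
      mul_le_mul_of_nonneg_right hM2 (Real.rpow_pos_of_pos htpos (-a)).le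
    calc y t ≤ max K 0 := h1
      _ = max K 0 * (1 + T) ^ a * (1 + T) ^ (-a) := by rw [mul_assoc, h3, mul_one]
      _ ≤ max K 0 * (1 + T) ^ a * (1 + t) ^ (-a) := h4
      _ ≤ M * (1 + t) ^ (-a) := h5
  -- auxiliary function w
  set w : ℝ → ℝ := fun t => Real.exp (γ * t) * (y t - M * (1 + t) ^ (-a)) with hwdef
  set w' : ℝ → ℝ := fun t =>
    Real.exp (γ * t) * γ * (y t - M * (1 + t) ^ (-a)) +
      Real.exp (γ * t) * (y' t - M * (-a * (1 + t) ^ (-a - 1))) with hw'def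
  have hwderiv : ∀ t ∈ Set.Ici (1:ℝ), HasDerivAt w (w' t) t := by
    intro t ht
    have htpos : (0:ℝ) < 1 + t := hbase t ht
    have h1 : HasDerivAt (fun s : ℝ => Real.exp (γ * s)) (Real.exp (γ * t) * γ) t := by
      simpa using ((hasDerivAt_id t).const_mul γ).exp
    have h2 : HasDerivAt (fun s : ℝ => (1 + s) ^ (-a)) (-a * (1 + t) ^ (-a - 1)) t := by
      have := ((hasDerivAt_id t).const_add 1).rpow_const (p := -a) (Or.inl htpos.ne')
      simpa using this
    have h3 : HasDerivAt (fun s => y s - M * (1 + s) ^ (-a))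
        (y' t - M * (-a * (1 + t) ^ (-a - 1))) t :=
      (hderiv t ht).sub (h2.const_mul M)
    exact h1.mul h3
  -- derivative of w is nonpositive on [T, ∞)
  have hw'nonpos : ∀ t ∈ Set.Ici T, w' t ≤ 0 := by
    intro t ht
    have hTt : T ≤ t := ht
    have ht1 : (1:ℝ) ≤ t := le_trans hT1 hTt
    have htpos : (0:ℝ) < 1 + t := hbase t ht1
    have hP : (0:ℝ) < (1 + t) ^ (-a) := Real.rpow_pos_of_pos htpos (-a)
    have hQ : (1 + t) ^ (-a - 1) = (1 + t) ^ (-a) * (1 + t)⁻¹ := by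
      rw [show -a - 1 = -a + (-1) by ring, Real.rpow_add htpos, Real.rpow_neg_one]
    have hfrac : a * (1 + t)⁻¹ ≤ γ / 2 := by
      rw [div_eq_mul_inv, mul_comm a]
      have h2a : 2 * a ≤ γ * t := by
        have h := (div_le_iff₀ hγ).mp hTa
        nlinarith [mul_nonneg (sub_nonneg.mpr hTt) hγ.le]
      have haux : a ≤ γ / 2 * (1 + t) := by nlinarith
      calc (1 + t)⁻¹ * a ≤ (1 + t)⁻¹ * (γ / 2 * (1 + t)) :=
            mul_le_mul_of_nonneg_left haux (by positivity)
        _ = γ * 2⁻¹ := by field_simp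
    have hCγ : C ≤ γ * M / 2 := by
      have := (div_le_iff₀ hγ).mp hM1
      nlinarith [mul_comm M γ]
    have hforce : y' t + γ * y t ≤ C * (1 + t) ^ (-a) := hineq t ht1
    have hexp : (0:ℝ) < Real.exp (γ * t) := Real.exp_pos _
    have hMa : M * (a * (1 + t) ^ (-a - 1)) ≤ γ / 2 * M * (1 + t) ^ (-a) := by
      rw [hQ]
      nlinarith [mul_le_mul_of_nonneg_right
        (mul_le_mul_of_nonneg_left hfrac hM0.le) hP.le]
    have key : y' t + γ * y t - γ * M * (1 + t) ^ (-a)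
        + M * (a * (1 + t) ^ (-a - 1)) ≤ 0 := by
      nlinarith [mul_nonneg (sub_nonneg.mpr hCγ) hP.le]
    have hw'eq : w' t = Real.exp (γ * t) *
        (y' t + γ * y t - γ * M * (1 + t) ^ (-a) + M * (a * (1 + t) ^ (-a - 1))) := by
      simp only [hw'def]; ring
    rw [hw'eq]
    exact mul_nonpos_of_nonneg_of_nonpos hexp.le key
  -- w is antitone on [T, ∞)
  have hanti : AntitoneOn w (Set.Ici T) := by
    apply antitoneOn_of_deriv_nonpos (convex_Ici T)
    · intro t ht
      exact ((hwderiv t (le_trans hT1 ht)).continuousAt).continuousWithinAt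
    · intro t ht
      rw [interior_Ici] at ht
      exact ((hwderiv t (le_trans hT1 ht.le)).differentiableAt).differentiableWithinAt
    · intro t ht
      rw [interior_Ici] at ht
      rw [(hwderiv t (le_trans hT1 ht.le)).deriv]
      exact hw'nonpos t (Set.mem_Ici.mpr (le_of_lt ht))
  have hwT : w T ≤ 0 := by
    have := claim1 T ⟨hT1, le_refl T⟩
    have hexp : (0:ℝ) < Real.exp (γ * T) := Real.exp_pos _
    simp only [hwdef]
    exact mul_nonpos_of_nonneg_of_nonpos hexp.le (by linarith)
  refine ⟨M, hM0, ?_⟩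
  intro t ht
  rcases le_total t T with hcase | hcase
  · exact claim1 t ⟨ht, hcase⟩
  · have hwt : w t ≤ 0 :=
      le_trans (hanti (Set.mem_Ici.mpr le_rfl) (Set.mem_Ici.mpr hcase) hcase) hwT
    have hexp : (0:ℝ) < Real.exp (γ * t) := Real.exp_pos _
    simp only [hwdef] at hwt
    by_contra h
    push_neg at h
    nlinarith [mul_pos hexp (sub_pos.mpr h)]
end

section
/- Let X be a real Banach space, θ ∈ (0, 1/2), β > 0, c > 0, Φ∞ ∈ ℝ, and ψ ∈ X. Let u : ℝ → X and Φ : ℝ → ℝ be continuously differentiable on [0, ∞), with Φ nonincreasing on [0, ∞). Assume: (i) Φ(t) ≥ Φ∞ for all t ≥ 0; (ii) ‖u'(t)‖² ≤ -Φ'(t) for all t ≥ 0; (iii) for every t ≥ 0 with Φ(t) > Φ∞ and ‖u(t) - ψ‖ < β one has -Φ'(t) ≥ (c/θ) (Φ(t) - Φ∞)^{1-θ} ‖u'(t)‖; (iv) there exists a sequence t_n → ∞ with u(t_n) → ψ in X. Then u(t) → ψ in X as t → ∞. -/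
open Filter Topology

open MeasureTheory

lemma arc_bound {X : Type*} [NormedAddCommGroup X] [NormedSpace ℝ X] [CompleteSpace X]
    (u : ℝ → X) (u' : ℝ → X) (g g' : ℝ → ℝ) (c a b : ℝ)
    (hc : 0 ≤ c) (h0 : 0 ≤ a) (hab : a ≤ b)
    (hu : ∀ t ∈ Set.Ici (0:ℝ), HasDerivAt u (u' t) t)
    (hu' : ContinuousOn u' (Set.Ici (0:ℝ)))
    (hg : ∀ t ∈ Set.Ici (0:ℝ), HasDerivAt g (g' t) t)
    (hg' : ContinuousOn g' (Set.Ici (0:ℝ)))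
    (hbound : ∀ t ∈ Set.Icc a b, c * ‖u' t‖ ≤ -g' t) :
    c * ‖u b - u a‖ ≤ g a - g b := by
  have hsub : Set.uIcc a b ⊆ Set.Ici (0:ℝ) := by
    rw [Set.uIcc_of_le hab]; exact fun x hx => le_trans h0 hx.1
  have hInt_u : IntervalIntegrable u' volume a b :=
    (hu'.mono hsub).intervalIntegrable
  have hInt_g : IntervalIntegrable g' volume a b :=
    (hg'.mono hsub).intervalIntegrable
  have hu_eq : ∫ t in a..b, u' t = u b - u a :=
    intervalIntegral.integral_eq_sub_of_hasDerivAt (fun t ht => hu t (hsub ht)) hInt_u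
  have hg_eq : ∫ t in a..b, g' t = g b - g a :=
    intervalIntegral.integral_eq_sub_of_hasDerivAt (fun t ht => hg t (hsub ht)) hInt_g
  have h1 : ‖u b - u a‖ ≤ ∫ t in a..b, ‖u' t‖ := by
    rw [← hu_eq]; exact intervalIntegral.norm_integral_le_integral_norm hab
  have hInt_nu : IntervalIntegrable (fun t => c * ‖u' t‖) volume a b :=
    (continuousOn_const.mul (hu'.mono hsub).norm).intervalIntegrable
  have h2 : ∫ t in a..b, c * ‖u' t‖ ≤ ∫ t in a..b, -g' t :=
    intervalIntegral.integral_mono_on hab hInt_nu hInt_g.neg hbound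
  calc c * ‖u b - u a‖ ≤ c * ∫ t in a..b, ‖u' t‖ := mul_le_mul_of_nonneg_left h1 hc
    _ = ∫ t in a..b, c * ‖u' t‖ := (intervalIntegral.integral_const_mul _ _).symm
    _ ≤ ∫ t in a..b, -g' t := h2
    _ = g a - g b := by rw [intervalIntegral.integral_neg, hg_eq]; ring

/-- Abstract Łojasiewicz–Simon convergence argument: let `X` be a real
Banach space, `θ ∈ (0,1/2)`, `β > 0`, `c > 0`, `Φinf ∈ ℝ`, `ψ ∈ X`, and let
`u : ℝ → X`, `Φ : ℝ → ℝ` be continuously differentiable on `[0,∞)` with `Φ`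
nonincreasing. If (i) `Φ(t) ≥ Φinf`, (ii) `‖u'(t)‖² ≤ -Φ'(t)`, (iii) the
Łojasiewicz-type inequality `-Φ'(t) ≥ (c/θ)(Φ(t) - Φinf)^{1-θ}‖u'(t)‖` holds whenever
`Φ(t) > Φinf` and `‖u(t) - ψ‖ < β`, and (iv) `u(t_n) → ψ` along some sequence
`t_n → ∞`, then `u(t) → ψ` as `t → ∞`. -/
theorem lojasiewicz_simon_convergence
    {X : Type*} [NormedAddCommGroup X] [NormedSpace ℝ X] [CompleteSpace X]
    (θ β c Φinf : ℝ) (hθ : θ ∈ Set.Ioo (0:ℝ) (1/2)) (hβ : 0 < β) (hc : 0 < c)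
    (ψ : X) (u : ℝ → X) (u' : ℝ → X) (Φ Φ' : ℝ → ℝ)
    (hu : ∀ t ∈ Set.Ici (0:ℝ), HasDerivAt u (u' t) t)
    (hu' : ContinuousOn u' (Set.Ici (0:ℝ)))
    (hΦ : ∀ t ∈ Set.Ici (0:ℝ), HasDerivAt Φ (Φ' t) t)
    (hΦ' : ContinuousOn Φ' (Set.Ici (0:ℝ)))
    (hmono : AntitoneOn Φ (Set.Ici (0:ℝ)))
    (h1 : ∀ t ∈ Set.Ici (0:ℝ), Φinf ≤ Φ t)
    (h2 : ∀ t ∈ Set.Ici (0:ℝ), ‖u' t‖ ^ 2 ≤ -Φ' t)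
    (h3 : ∀ t ∈ Set.Ici (0:ℝ), Φinf < Φ t → ‖u t - ψ‖ < β →
      (c / θ) * (Φ t - Φinf) ^ (1 - θ) * ‖u' t‖ ≤ -Φ' t)
    (h4 : ∃ tseq : ℕ → ℝ, Tendsto tseq atTop atTop ∧
      Tendsto (fun n => u (tseq n)) atTop (𝓝 ψ)) :
    Tendsto u atTop (𝓝 ψ) := by
  obtain ⟨hθ0, hθhalf⟩ := hθ
  obtain ⟨tseq, htseq, hconv⟩ := h4
  have hucont : ContinuousOn u (Set.Ici (0:ℝ)) :=
    fun t ht => (hu t ht).continuousAt.continuousWithinAt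
  have hΦcont : ContinuousOn Φ (Set.Ici (0:ℝ)) :=
    fun t ht => (hΦ t ht).continuousAt.continuousWithinAt
  by_cases hcase : ∃ s ∈ Set.Ici (0:ℝ), Φ s = Φinf
  · -- Case A : Φ hits Φinf, so Φ is constant and u is constant afterwards
    obtain ⟨s₀, hs₀, hΦs₀⟩ := hcase
    have hconstΦ : ∀ t, s₀ ≤ t → Φ t = Φinf := fun t ht =>
      le_antisymm (hΦs₀ ▸ hmono hs₀ (le_trans hs₀ ht) ht) (h1 t (le_trans hs₀ ht))
    have hu'0 : ∀ t, s₀ < t → u' t = 0 := by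
      intro t ht
      have htIci : t ∈ Set.Ici (0:ℝ) := le_trans hs₀ ht.le
      have hev : Φ =ᶠ[𝓝 t] fun _ => Φinf := by
        filter_upwards [Ioi_mem_nhds ht] with x hx
        exact hconstΦ x (le_of_lt hx)
      have hd0 : HasDerivAt Φ 0 t := (hasDerivAt_const t Φinf).congr_of_eventuallyEq hev
      have : Φ' t = 0 := (hΦ t htIci).unique hd0
      have h2t := h2 t htIci
      rw [this] at h2t
      have : ‖u' t‖ = 0 := by nlinarith [norm_nonneg (u' t)]
      exact norm_eq_zero.mp this
    set a := s₀ + 1 with ha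
    have ha0 : (0:ℝ) ≤ a := by linarith [hs₀.out]
    have huconst : ∀ t, a ≤ t → u t = u a := by
      intro t ht
      have := arc_bound u u' (fun _ => 0) (fun _ => 0) 1 a t (by norm_num) ha0 ht
        hu hu' (fun s _ => hasDerivAt_const s 0) continuousOn_const
        (fun s hs => by
          rw [hu'0 s (by linarith [hs.1])]; simp)
      have : ‖u t - u a‖ ≤ 0 := by linarith
      have : u t - u a = 0 := norm_le_zero_iff.mp this
      exact sub_eq_zero.mp this
    have hψeq : u a = ψ := by
      have hev : (fun n => u (tseq n)) =ᶠ[atTop] fun _ => u a := by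
        filter_upwards [htseq.eventually_ge_atTop a] with n hn
        exact huconst (tseq n) hn
      have hT : Tendsto (fun _ : ℕ => u a) atTop (𝓝 ψ) := hconv.congr' hev
      exact (tendsto_nhds_unique hT tendsto_const_nhds).symm
    have : ∀ᶠ t in atTop, u t = ψ := by
      filter_upwards [eventually_ge_atTop a] with t ht
      rw [huconst t ht, hψeq]
    exact Tendsto.congr' (by filter_upwards [this] with t ht; exact ht.symm)
      tendsto_const_nhds
  · -- Case B : Φ t > Φinf for all t ≥ 0
    push_neg at hcase
    have hpos : ∀ t ∈ Set.Ici (0:ℝ), Φinf < Φ t :=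
      fun t ht => lt_of_le_of_ne (h1 t ht) (Ne.symm (hcase t ht))
    set H : ℝ → ℝ := fun t => (Φ t - Φinf) ^ θ with hHdef
    set H' : ℝ → ℝ := fun t => Φ' t * θ * (Φ t - Φinf) ^ (θ - 1) with hH'def
    have hxpos : ∀ t ∈ Set.Ici (0:ℝ), (0:ℝ) < Φ t - Φinf :=
      fun t ht => sub_pos.mpr (hpos t ht)
    have hHd : ∀ t ∈ Set.Ici (0:ℝ), HasDerivAt H (H' t) t := by
      intro t ht
      exact ((hΦ t ht).sub_const Φinf).rpow_const (Or.inl (ne_of_gt (hxpos t ht)))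
    have hH'cont : ContinuousOn H' (Set.Ici (0:ℝ)) := by
      apply (hΦ'.mul continuousOn_const).mul
      exact (hΦcont.sub continuousOn_const).rpow_const
        (fun x hx => Or.inl (ne_of_gt (hxpos x hx)))
    have hHnonneg : ∀ t ∈ Set.Ici (0:ℝ), 0 ≤ H t :=
      fun t ht => Real.rpow_nonneg (le_of_lt (hxpos t ht)) θ
    have hHanti : ∀ s ∈ Set.Ici (0:ℝ), ∀ t ∈ Set.Ici (0:ℝ), s ≤ t → H t ≤ H s := by
      intro s hs t ht hst
      exact Real.rpow_le_rpow (le_of_lt (hxpos t ht))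
        (by linarith [hmono hs ht hst]) (le_of_lt hθ0)
    -- infimum of H
    set l := sInf (H '' Set.Ici 0) with hl
    have hne : (H '' Set.Ici 0).Nonempty := ⟨H 0, Set.mem_image_of_mem H Set.self_mem_Ici⟩
    have hbdd : BddBelow (H '' Set.Ici 0) := by
      refine ⟨0, fun y hy => ?_⟩
      obtain ⟨x, hx, rfl⟩ := hy
      exact hHnonneg x hx
    have hlle : ∀ t ∈ Set.Ici (0:ℝ), l ≤ H t :=
      fun t ht => csInf_le hbdd (Set.mem_image_of_mem H ht)
    rw [Metric.tendsto_atTop]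
    intro ε hε
    set δ := min ε β with hδdef
    have hδ0 : 0 < δ := lt_min hε hβ
    have hδε : δ ≤ ε := min_le_left _ _
    have hδβ : δ ≤ β := min_le_right _ _
    -- a point where H is close to l
    obtain ⟨y, hy, hys⟩ := (csInf_lt_iff hbdd hne).mp
      (show l < l + c * δ / 4 by have : 0 < c * δ / 4 := by positivity
                                 linarith)
    obtain ⟨s0, hs0mem, hy'⟩ := hy
    have hs0 : (0:ℝ) ≤ s0 := hs0mem
    rw [Metric.tendsto_atTop] at hconv
    obtain ⟨N, hN⟩ := hconv (δ/4) (by positivity)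
    obtain ⟨n, hn1, hn2⟩ : ∃ n, s0 ≤ tseq n ∧ N ≤ n :=
      ((htseq.eventually_ge_atTop s0).and (eventually_ge_atTop N)).exists
    set T := tseq n with hTdef
    have hT0 : (0:ℝ) ≤ T := le_trans hs0 hn1
    have hHT : H T < l + c * δ / 4 := lt_of_le_of_lt (hHanti s0 hs0mem T hT0 hn1)
      (by rw [hy']; exact hys)
    have hTd : ‖u T - ψ‖ < δ/4 := by
      have := hN n hn2
      rwa [dist_eq_norm] at this
    have key : ∀ t, T ≤ t → ‖u t - ψ‖ < δ/2 := by
      by_contra hcon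
      push_neg at hcon
      obtain ⟨t₁, ht₁T, ht₁⟩ := hcon
      set B := Set.Ici T ∩ (fun s => ‖u s - ψ‖) ⁻¹' Set.Ici (δ/2) with hB
      have hBne : B.Nonempty := ⟨t₁, ht₁T, ht₁⟩
      have hfc : ContinuousOn (fun s => ‖u s - ψ‖) (Set.Ici T) :=
        ((hucont.mono (Set.Ici_subset_Ici.mpr hT0)).sub continuousOn_const).norm
      have hBc : IsClosed B := hfc.preimage_isClosed_of_isClosed isClosed_Ici isClosed_Ici
      have hBbdd : BddBelow B := ⟨T, fun x hx => hx.1⟩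
      set tb := sInf B with htbdef
      have htbB : tb ∈ B := hBc.csInf_mem hBne hBbdd
      have htbT : T ≤ tb := htbB.1
      have htb0 : (0:ℝ) ≤ tb := le_trans hT0 htbT
      have hTnB : T ∉ B := by
        intro h
        have h' : δ/2 ≤ ‖u T - ψ‖ := h.2
        linarith
      have hTlt : T < tb := lt_of_le_of_ne htbT (fun h => hTnB (h ▸ htbB))
      have hbefore : ∀ s, T ≤ s → s < tb → ‖u s - ψ‖ < δ/2 := by
        intro s hs1 hs2
        by_contra hs3
        push_neg at hs3
        exact absurd (csInf_le hBbdd ⟨hs1, hs3⟩) (not_le.mpr hs2)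
      have hub : ‖u tb - ψ‖ ≤ δ/2 := by
        have hIoosub : Set.Ioo T tb ⊆ Set.Ici (0:ℝ) :=
          fun x hx => le_trans hT0 (le_of_lt hx.1)
        have hcw : ContinuousWithinAt (fun s => ‖u s - ψ‖) (Set.Ioo T tb) tb :=
          (((hucont tb htb0).mono hIoosub).sub continuousWithinAt_const).norm
        have hNB : (𝓝[Set.Ioo T tb] tb).NeBot := by
          refine mem_closure_iff_nhdsWithin_neBot.mp ?_
          rw [closure_Ioo (ne_of_lt hTlt)]
          exact ⟨le_of_lt hTlt, le_refl _⟩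
        refine le_of_tendsto hcw ?_
        filter_upwards [self_mem_nhdsWithin] with s hs
        exact le_of_lt (hbefore s (le_of_lt hs.1) hs.2)
      have hball : ∀ s ∈ Set.Icc T tb, ‖u s - ψ‖ < β := by
        intro s hs
        rcases lt_or_eq_of_le hs.2 with h | h
        · exact lt_of_lt_of_le (hbefore s hs.1 h) (by linarith)
        · rw [h]; linarith
      have hbound : ∀ s ∈ Set.Icc T tb, c * ‖u' s‖ ≤ -H' s := by
        intro s hs
        have hs0' : s ∈ Set.Ici (0:ℝ) := le_trans hT0 hs.1
        have hxp := hxpos s hs0'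
        have h3' := h3 s hs0' (hpos s hs0') (hball s hs)
        set x := Φ s - Φinf with hxdef
        have hxx : x ^ (θ - 1) * x ^ (1 - θ) = 1 := by
          rw [← Real.rpow_add hxp]; norm_num
        have e : (θ * x ^ (θ-1)) * ((c/θ) * x ^ (1-θ) * ‖u' s‖)
            = c * (x^(θ-1) * x^(1-θ)) * ‖u' s‖ := by
          field_simp
        rw [hxx, mul_one] at e
        have hm := mul_le_mul_of_nonneg_left h3'
          (show (0:ℝ) ≤ θ * x^(θ-1) by positivity)
        rw [e] at hm
        have hr : -H' s = θ * x^(θ-1) * (-Φ' s) := by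
          simp only [hH'def, ← hxdef]; ring
        rw [hr]
        exact hm
      have harc := arc_bound u u' H H' c T tb (le_of_lt hc) hT0 htbT hu hu'
        hHd hH'cont hbound
      have h5 : H T - H tb < c * δ / 4 := by
        have := hlle tb htb0
        linarith
      have h6 : ‖u tb - u T‖ < δ/4 :=
        (mul_lt_mul_iff_right₀ hc).mp (by linarith)
      have h7 : ‖u tb - ψ‖ ≤ ‖u tb - u T‖ + ‖u T - ψ‖ := by
        have hrw : u tb - ψ = (u tb - u T) + (u T - ψ) := by abel
        rw [hrw]; exact norm_add_le _ _
      have h8 : δ/2 ≤ ‖u tb - ψ‖ := htbB.2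
      linarith
    exact ⟨T, fun t ht => by rw [dist_eq_norm]; linarith [key t ht]⟩
end

section
/- Let X be a real Banach space, θ ∈ (0, 1/2), c > 0, C > 0, Φ∞ ∈ ℝ, t₀ ≥ 0, and ψ ∈ X. Let u : ℝ → X and Φ : ℝ → ℝ be continuously differentiable on [t₀, ∞), with Φ nonincreasing and Φ(t) > Φ∞ for all t ≥ t₀. Assume that for all t ≥ t₀: -Φ'(t) ≥ (c/θ)(Φ(t) - Φ∞)^{1-θ} ‖u'(t)‖ and -Φ'(t) ≥ C (Φ(t) - Φ∞)^{2(1-θ)}, and assume u(t) → ψ in X as t → ∞. Then there exists a constant C' > 0 such that ‖u(t) - ψ‖ ≤ C' (1 + t)^{-θ/(1-2θ)} for all t ≥ t₀. -/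
open Filter Topology

/-- Abstract convergence-rate scheme of Part II of Section 5: if
`Φ` is a nonincreasing `C¹` Lyapunov function on `[t₀,∞)` with `Φ(t) > Φinf`,
satisfying `-Φ'(t) ≥ (c/θ)(Φ(t)-Φinf)^{1-θ}‖u'(t)‖` and
`-Φ'(t) ≥ C(Φ(t)-Φinf)^{2(1-θ)}`, and `u(t) → ψ`, then
`‖u(t) - ψ‖ ≤ C'(1+t)^{-θ/(1-2θ)}` on `[t₀,∞)` for some `C' > 0`. -/
theorem lojasiewicz_simon_convergence_rate
    {X : Type*} [NormedAddCommGroup X] [NormedSpace ℝ X] [CompleteSpace X]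
    (θ c C Φinf t₀ : ℝ) (hθ : θ ∈ Set.Ioo (0:ℝ) (1/2)) (hc : 0 < c) (hC : 0 < C)
    (ht₀ : 0 ≤ t₀) (ψ : X) (u : ℝ → X) (u' : ℝ → X) (Φ Φ' : ℝ → ℝ)
    (hu : ∀ t ∈ Set.Ici t₀, HasDerivAt u (u' t) t)
    (hu' : ContinuousOn u' (Set.Ici t₀))
    (hΦ : ∀ t ∈ Set.Ici t₀, HasDerivAt Φ (Φ' t) t)
    (hΦ' : ContinuousOn Φ' (Set.Ici t₀))
    (hmono : AntitoneOn Φ (Set.Ici t₀))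
    (hgt : ∀ t ∈ Set.Ici t₀, Φinf < Φ t)
    (h1 : ∀ t ∈ Set.Ici t₀, (c / θ) * (Φ t - Φinf) ^ (1 - θ) * ‖u' t‖ ≤ -Φ' t)
    (h2 : ∀ t ∈ Set.Ici t₀, C * (Φ t - Φinf) ^ (2 * (1 - θ)) ≤ -Φ' t)
    (hconv : Tendsto u atTop (𝓝 ψ)) :
    ∃ C' : ℝ, 0 < C' ∧ ∀ t ∈ Set.Ici t₀,
      ‖u t - ψ‖ ≤ C' * (1 + t) ^ (-(θ / (1 - 2 * θ))) := by
  obtain ⟨hθ0, hθ2⟩ := hθ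
  have h12 : 0 < 1 - 2 * θ := by linarith
  set E : ℝ → ℝ := fun t => Φ t - Φinf with hEdef
  have hEpos : ∀ t ∈ Set.Ici t₀, 0 < E t := fun t ht => sub_pos.2 (hgt t ht)
  have hEd : ∀ t ∈ Set.Ici t₀, HasDerivAt E (Φ' t) t := fun t ht =>
    (hΦ t ht).sub_const _
  -- derivative of E^p for any p
  have hEpow : ∀ (p : ℝ), ∀ t ∈ Set.Ici t₀,
      HasDerivAt (fun s => E s ^ p) (Φ' t * p * E t ^ (p - 1)) t := by
    intro p t ht
    exact (hEd t ht).rpow_const (Or.inl (ne_of_gt (hEpos t ht)))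
  -- Step 1: lower bound for g t = E t ^ (2θ - 1)
  set g : ℝ → ℝ := fun t => E t ^ (2 * θ - 1) with hgdef
  have hgd : ∀ t ∈ Set.Ici t₀, HasDerivAt g (Φ' t * (2 * θ - 1) * E t ^ (2 * θ - 1 - 1)) t :=
    hEpow _
  have hgbound : ∀ t ∈ Set.Ici t₀, (1 - 2 * θ) * C ≤ Φ' t * (2 * θ - 1) * E t ^ (2 * θ - 1 - 1) := by
    intro t ht
    have hE := hEpos t ht
    have h2' := h2 t ht
    have hpow : E t ^ (2 * θ - 1 - 1) * E t ^ (2 * (1 - θ)) = 1 := by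
      rw [← Real.rpow_add hE, show 2 * θ - 1 - 1 + 2 * (1 - θ) = 0 by ring, Real.rpow_zero]
    have hnn : (0:ℝ) ≤ E t ^ (2 * θ - 1 - 1) := (Real.rpow_pos_of_pos hE _).le
    calc (1 - 2 * θ) * C = (1 - 2 * θ) * (E t ^ (2 * θ - 1 - 1) * (C * E t ^ (2 * (1 - θ)))) := by
            rw [show E t ^ (2 * θ - 1 - 1) * (C * E t ^ (2 * (1 - θ)))
                = C * (E t ^ (2 * θ - 1 - 1) * E t ^ (2 * (1 - θ))) by ring, hpow, mul_one]
      _ ≤ (1 - 2 * θ) * (E t ^ (2 * θ - 1 - 1) * (-Φ' t)) := by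
            apply mul_le_mul_of_nonneg_left _ h12.le
            exact mul_le_mul_of_nonneg_left h2' hnn
      _ = Φ' t * (2 * θ - 1) * E t ^ (2 * θ - 1 - 1) := by ring
  have hglin : ∀ t ∈ Set.Ici t₀, g t₀ + (1 - 2 * θ) * C * (t - t₀) ≤ g t := by
    intro t ht
    have key := (convex_Ici t₀).mul_sub_le_image_sub_of_le_deriv
      (f := g)
      (fun s hs => ((hgd s hs).continuousAt).continuousWithinAt)
      (fun s hs => ((hgd s (interior_subset hs)).differentiableAt).differentiableWithinAt)
      (fun s hs => by
        rw [(hgd s (interior_subset hs)).deriv]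
        exact hgbound s (interior_subset hs))
      t₀ Set.self_mem_Ici t ht ht
    linarith
  set m : ℝ := min (g t₀ / (1 + t₀)) ((1 - 2 * θ) * C) with hmdef
  have h1t₀ : (0:ℝ) < 1 + t₀ := by linarith
  have hgt₀pos : 0 < g t₀ := Real.rpow_pos_of_pos (hEpos t₀ Set.self_mem_Ici) _
  have hm : 0 < m := lt_min (div_pos hgt₀pos h1t₀) (mul_pos h12 hC)
  have hglow : ∀ t ∈ Set.Ici t₀, m * (1 + t) ≤ g t := by
    intro t ht
    have h1 : m * (1 + t₀) ≤ g t₀ := by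
      rw [← le_div_iff₀ h1t₀]
      exact min_le_left _ _
    have h2 : m * (t - t₀) ≤ (1 - 2 * θ) * C * (t - t₀) :=
      mul_le_mul_of_nonneg_right (min_le_right _ _) (by exact sub_nonneg.2 ht)
    have := hglin t ht
    nlinarith
  -- Step 2: E t ≤ m^(-(1/(1-2θ))) * (1+t)^(-(1/(1-2θ)))
  have hEbound : ∀ t ∈ Set.Ici t₀,
      E t ≤ m ^ (-(1 / (1 - 2 * θ))) * (1 + t) ^ (-(1 / (1 - 2 * θ))) := by
    intro t ht
    have h1t : (0:ℝ) < 1 + t := by have := ht; simp only [Set.mem_Ici] at this; linarith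
    have hmt : 0 < m * (1 + t) := mul_pos hm h1t
    have hle : m * (1 + t) ≤ g t := hglow t ht
    have hexp : -(1 / (1 - 2 * θ)) ≤ 0 := neg_nonpos.2 (div_pos one_pos h12).le
    have hgE : (E t ^ (2 * θ - 1)) ^ (-(1 / (1 - 2 * θ))) = E t := by
      rw [← Real.rpow_mul (hEpos t ht).le]
      rw [show (2 * θ - 1) * -(1 / (1 - 2 * θ)) = 1 by field_simp; ring]
      exact Real.rpow_one _
    calc E t = (E t ^ (2 * θ - 1)) ^ (-(1 / (1 - 2 * θ))) := hgE.symm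
      _ ≤ (m * (1 + t)) ^ (-(1 / (1 - 2 * θ))) :=
          Real.rpow_le_rpow_of_nonpos hmt hle hexp
      _ = m ^ (-(1 / (1 - 2 * θ))) * (1 + t) ^ (-(1 / (1 - 2 * θ))) :=
          Real.mul_rpow hm.le h1t.le
  -- Step 3: ‖u T - u t‖ ≤ (1/c) * E t ^ θ for t₀ ≤ t ≤ T
  have hstep3 : ∀ t ∈ Set.Ici t₀, ∀ T, t ≤ T → ‖u T - u t‖ ≤ (1 / c) * E t ^ θ := by
    intro t ht T hT
    have hsub : Set.Icc t T ⊆ Set.Ici t₀ := fun s hs => le_trans ht hs.1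
    have hsub' : Set.Ico t T ⊆ Set.Ici t₀ := fun s hs => le_trans ht hs.1
    set B : ℝ → ℝ := fun s => (1 / c) * (E t ^ θ - E s ^ θ) with hBdef
    have hBd : ∀ s ∈ Set.Ici t₀, HasDerivAt B ((1 / c) * -(Φ' s * θ * E s ^ (θ - 1))) s := by
      intro s hs
      exact (((hEpow θ s hs).const_sub (E t ^ θ)).const_mul (1 / c))
    have key : ‖u T - u t‖ ≤ B T := by
      refine image_norm_le_of_norm_deriv_right_le_deriv_boundary'
        (f := fun s => u s - u t) (f' := u')
        (fun s hs => ((hu s (hsub hs)).continuousAt.continuousWithinAt).sub continuousWithinAt_const)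
        (fun s hs => (((hu s (hsub' hs)).sub_const _).hasDerivWithinAt))
        (by simp [hBdef])
        (fun s hs => (hBd s (hsub hs)).continuousAt.continuousWithinAt)
        (fun s hs => (hBd s (hsub' hs)).hasDerivWithinAt)
        (fun s hs => ?_) ⟨hT, le_refl T⟩
      -- bound: ‖u' s‖ ≤ -(1/c) * (Φ' s * θ * E s ^ (θ-1))
      have hs' : s ∈ Set.Ici t₀ := hsub' hs
      have hE := hEpos s hs'
      have hI := h1 s hs'
      have hpow : E s ^ (θ - 1) * E s ^ (1 - θ) = 1 := by
        rw [← Real.rpow_add hE, show θ - 1 + (1 - θ) = 0 by ring, Real.rpow_zero]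
      have hposp : (0:ℝ) < E s ^ (θ - 1) := Real.rpow_pos_of_pos hE _
      have : ‖u' s‖ ≤ (θ / c) * E s ^ (θ - 1) * (-Φ' s) := by
        have h3 := mul_le_mul_of_nonneg_left hI (by positivity : (0:ℝ) ≤ (θ / c) * E s ^ (θ - 1))
        have hone : θ / c * (c / θ) = 1 := by
          rw [div_mul_div_comm, mul_comm θ c]
          exact div_self (by positivity)
        calc ‖u' s‖ = θ / c * (c / θ) * (E s ^ (θ - 1) * E s ^ (1 - θ)) * ‖u' s‖ := by
              rw [hone, hpow]; ring
          _ = (θ / c) * E s ^ (θ - 1) * ((c / θ) * E s ^ (1 - θ) * ‖u' s‖) := by ring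
          _ ≤ (θ / c) * E s ^ (θ - 1) * (-Φ' s) := h3
      calc ‖u' s‖ ≤ (θ / c) * E s ^ (θ - 1) * (-Φ' s) := this
        _ = 1 / c * -(Φ' s * θ * E s ^ (θ - 1)) := by ring
    have hBle : B T ≤ (1 / c) * E t ^ θ := by
      rw [hBdef]
      have : (0:ℝ) ≤ E T ^ θ := (Real.rpow_pos_of_pos (hEpos T (le_trans ht hT)) _).le
      have hci : (0:ℝ) ≤ 1 / c := by positivity
      nlinarith
    exact key.trans hBle
  -- Step 4: limit T → ∞
  have hstep4 : ∀ t ∈ Set.Ici t₀, ‖u t - ψ‖ ≤ (1 / c) * E t ^ θ := by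
    intro t ht
    have hlim : Tendsto (fun T => ‖u T - u t‖) atTop (𝓝 ‖ψ - u t‖) :=
      ((hconv.sub_const (u t)).norm)
    have hx : ‖ψ - u t‖ ≤ (1 / c) * E t ^ θ := by
      refine le_of_tendsto hlim ?_
      filter_upwards [eventually_ge_atTop t] with T hT
      exact hstep3 t ht T hT
    rwa [norm_sub_rev] at hx
  -- combine
  refine ⟨(1 / c) * m ^ (-(θ / (1 - 2 * θ))),
    mul_pos (by positivity) (Real.rpow_pos_of_pos hm _), fun t ht => ?_⟩
  have h1t : (0:ℝ) < 1 + t := by have := ht; simp only [Set.mem_Ici] at this; linarith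
  have hEb := hEbound t ht
  have hEtθ : E t ^ θ ≤ m ^ (-(θ / (1 - 2 * θ))) * (1 + t) ^ (-(θ / (1 - 2 * θ))) := by
    have h1 : E t ^ θ ≤ (m ^ (-(1 / (1 - 2 * θ))) * (1 + t) ^ (-(1 / (1 - 2 * θ)))) ^ θ :=
      Real.rpow_le_rpow (hEpos t ht).le hEb hθ0.le
    have h2 : (m ^ (-(1 / (1 - 2 * θ))) * (1 + t) ^ (-(1 / (1 - 2 * θ)))) ^ θ
        = m ^ (-(θ / (1 - 2 * θ))) * (1 + t) ^ (-(θ / (1 - 2 * θ))) := by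
      rw [Real.mul_rpow (Real.rpow_pos_of_pos hm _).le (Real.rpow_pos_of_pos h1t _).le,
        ← Real.rpow_mul hm.le, ← Real.rpow_mul h1t.le]
      rw [show -(1 / (1 - 2 * θ)) * θ = -(θ / (1 - 2 * θ)) by ring]
    exact h1.trans_eq h2
  calc ‖u t - ψ‖ ≤ (1 / c) * E t ^ θ := hstep4 t ht
    _ ≤ (1 / c) * (m ^ (-(θ / (1 - 2 * θ))) * (1 + t) ^ (-(θ / (1 - 2 * θ)))) := by
        apply mul_le_mul_of_nonneg_left hEtθ (by positivity)
    _ = (1 / c) * m ^ (-(θ / (1 - 2 * θ))) * (1 + t) ^ (-(θ / (1 - 2 * θ))) := by ring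
end

section
/- Let θ ∈ (0, 1/2), c > 0, K ≥ 0, and t₀ ≥ 0. Let Φ : ℝ → ℝ be differentiable and nonincreasing on [t₀, ∞) with 0 < Φ(t) ≤ K (1 + t)^{-1/(1-2θ)} for all t ≥ t₀, and let g : ℝ → ℝ be continuous and nonnegative on [t₀, ∞) such that -θ Φ(t)^{θ-1} Φ'(t) ≥ c · g(t) for all t ≥ t₀. Then for all t ≥ t₀: ∫_t^∞ g(τ) dτ ≤ (K^θ / c) (1 + t)^{-θ/(1-2θ)}. -/
open MeasureTheory

/-- The tail-integral estimate (5.18)–(5.19) of the paper: if `Φ`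
is positive, nonincreasing and differentiable on `[t₀,∞)` with
`Φ(t) ≤ K (1+t)^{-1/(1-2θ)}`, and `g ≥ 0` is continuous with
`-θ Φ(t)^{θ-1} Φ'(t) ≥ c g(t)` on `[t₀,∞)`, then
`∫_t^∞ g ≤ (K^θ/c)(1+t)^{-θ/(1-2θ)}` for all `t ≥ t₀`. -/
theorem tail_integral_estimate
    (θ c K t₀ : ℝ) (hθ : θ ∈ Set.Ioo (0:ℝ) (1/2)) (hc : 0 < c) (hK : 0 ≤ K)
    (ht₀ : 0 ≤ t₀) (Φ Φ' g : ℝ → ℝ)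
    (hΦd : ∀ t ∈ Set.Ici t₀, HasDerivAt Φ (Φ' t) t)
    (hmono : AntitoneOn Φ (Set.Ici t₀))
    (hΦpos : ∀ t ∈ Set.Ici t₀, 0 < Φ t)
    (hΦdecay : ∀ t ∈ Set.Ici t₀, Φ t ≤ K * (1 + t) ^ (-(1 / (1 - 2 * θ))))
    (hg : ContinuousOn g (Set.Ici t₀))
    (hgpos : ∀ t ∈ Set.Ici t₀, 0 ≤ g t)
    (hineq : ∀ t ∈ Set.Ici t₀, c * g t ≤ -θ * Φ t ^ (θ - 1) * Φ' t) :
    IntegrableOn g (Set.Ici t₀) ∧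
      ∀ t ∈ Set.Ici t₀,
        (∫ τ in Set.Ici t, g τ) ≤ (K ^ θ / c) * (1 + t) ^ (-(θ / (1 - 2 * θ))) := by
  -- interval integrability of g on [t₀, T]
  have hgint : ∀ T, t₀ ≤ T → IntervalIntegrable g volume t₀ T := by
    intro T hT
    apply ContinuousOn.intervalIntegrable
    apply hg.mono
    rw [Set.uIcc_of_le hT]
    exact fun x hx => hx.1
  -- the function h = Φ^θ + c * ∫_{t₀}^· g is antitone on [t₀, T], hence key bound
  have key : ∀ t ∈ Set.Ici t₀, ∀ T, t ≤ T → (∫ s in t..T, g s) ≤ Φ t ^ θ / c := by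
    intro t ht T hT
    have htT : t₀ ≤ T := le_trans ht hT
    set h : ℝ → ℝ := fun τ => Φ τ ^ θ + c * ∫ s in t₀..τ, g s with hh
    have hderiv : ∀ τ ∈ Set.Ioi t₀, HasDerivAt h (Φ' τ * θ * Φ τ ^ (θ - 1) + c * g τ) τ := by
      intro τ hτ
      have hτ' : τ ∈ Set.Ici t₀ := Set.mem_Ici.mpr (le_of_lt (Set.mem_Ioi.mp hτ))
      have h1 : HasDerivAt (fun x => Φ x ^ θ) (Φ' τ * θ * Φ τ ^ (θ - 1)) τ :=
        (hΦd τ hτ').rpow_const (Or.inl (hΦpos τ hτ').ne')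
      have hcg : ContinuousAt g τ :=
        (hg τ hτ').continuousAt (Ici_mem_nhds hτ)
      have h2 : HasDerivAt (fun u => ∫ s in t₀..u, g s) (g τ) τ :=
        intervalIntegral.integral_hasDerivAt_right (hgint τ hτ')
          ⟨Set.Ici t₀, Ici_mem_nhds hτ, hg.aestronglyMeasurable measurableSet_Ici⟩ hcg
      exact h1.add ((h2.const_mul c))
    have hanti : AntitoneOn h (Set.Icc t₀ T) := by
      have hconv : Convex ℝ (Set.Icc t₀ T) := convex_Icc _ _
      have hcont : ContinuousOn h (Set.Icc t₀ T) := by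
        apply ContinuousOn.add
        · intro x hx
          exact ((hΦd x hx.1).continuousAt.continuousWithinAt).rpow_const
            (Or.inl (hΦpos x hx.1).ne')
        · have hprim := intervalIntegral.continuousOn_primitive_interval'
            (μ := volume) (f := g) (b₁ := t₀) (b₂ := T) (a := t₀)
            (hgint T htT) (by simp [Set.uIcc_of_le htT, htT])
          rw [Set.uIcc_of_le htT] at hprim
          exact continuousOn_const.mul hprim
      apply antitoneOn_of_deriv_nonpos hconv hcont
      · intro x hx
        rw [interior_Icc] at hx
        exact (hderiv x (lt_of_le_of_lt (le_refl t₀) hx.1 : t₀ < x)).differentiableAt.differentiableWithinAt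
      · intro x hx
        rw [interior_Icc] at hx
        have hx' : x ∈ Set.Ici t₀ := le_of_lt hx.1
        rw [(hderiv x hx.1).deriv]
        have := hineq x hx'
        nlinarith [hΦpos x hx', hgpos x hx']
    have hle : h T ≤ h t := hanti ⟨ht, hT⟩ ⟨htT, le_refl T⟩ hT
    have hle' : Φ T ^ θ + c * ∫ s in t₀..T, g s ≤ Φ t ^ θ + c * ∫ s in t₀..t, g s := hle
    have hmidint : IntervalIntegrable g volume t T := by
      refine (hgint T htT).mono_set ?_
      rw [Set.uIcc_of_le hT, Set.uIcc_of_le htT]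
      exact Set.Icc_subset_Icc ht le_rfl
    have hsplit : (∫ s in t₀..t, g s) + (∫ s in t..T, g s) = ∫ s in t₀..T, g s :=
      intervalIntegral.integral_add_adjacent_intervals (hgint t ht) hmidint
    have hΦT : 0 ≤ Φ T ^ θ := Real.rpow_nonneg (hΦpos T htT).le θ
    rw [le_div_iff₀ hc]
    nlinarith [hsplit, hle']
  -- integrability on (t₀, ∞)
  have hIoi : IntegrableOn g (Set.Ioi t₀) := by
    apply MeasureTheory.integrableOn_Ioi_of_intervalIntegral_norm_bounded
      (Φ t₀ ^ θ / c) t₀ (f := g) (b := fun i : ℝ => max t₀ i) (l := Filter.atTop)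
    · intro i
      have : IntervalIntegrable g volume t₀ (max t₀ i) := hgint _ (le_max_left _ _)
      rw [intervalIntegrable_iff_integrableOn_Ioc_of_le (le_max_left _ _)] at this
      exact this
    · exact Filter.tendsto_atTop_mono (fun i => le_max_right _ _) Filter.tendsto_id
    · filter_upwards with i
      have heq : (∫ x in t₀..max t₀ i, ‖g x‖) = ∫ x in t₀..max t₀ i, g x := by
        apply intervalIntegral.integral_congr
        intro x hx
        rw [Set.uIcc_of_le (le_max_left t₀ i)] at hx
        exact Real.norm_of_nonneg (hgpos x hx.1)
      rw [heq]
      exact key t₀ (Set.mem_Ici.mpr le_rfl) _ (le_max_left _ _)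
  have hIci : IntegrableOn g (Set.Ici t₀) := by
    rwa [integrableOn_Ici_iff_integrableOn_Ioi]
  refine ⟨hIci, fun t ht => ?_⟩
  have hIoit : IntegrableOn g (Set.Ioi t) :=
    hIoi.mono_set (Set.Ioi_subset_Ioi ht)
  have h1t : (0:ℝ) ≤ 1 + t := by linarith [le_trans ht₀ ht]
  -- limit of interval integrals
  have htend : Filter.Tendsto (fun T : ℝ => ∫ s in t..T, g s) Filter.atTop
      (nhds (∫ τ in Set.Ioi t, g τ)) :=
    MeasureTheory.intervalIntegral_tendsto_integral_Ioi t hIoit Filter.tendsto_id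
  have hbound : (∫ τ in Set.Ioi t, g τ) ≤ Φ t ^ θ / c := by
    apply le_of_tendsto htend
    filter_upwards [Filter.eventually_ge_atTop t] with T hT
    exact key t ht T hT
  rw [MeasureTheory.integral_Ici_eq_integral_Ioi]
  refine hbound.trans ?_
  -- Φ t ^ θ ≤ K^θ (1+t)^{-θ/(1-2θ)}
  have hΦt : Φ t ^ θ ≤ K ^ θ * (1 + t) ^ (-(θ / (1 - 2 * θ))) := by
    have h1 : Φ t ^ θ ≤ (K * (1 + t) ^ (-(1 / (1 - 2 * θ)))) ^ θ :=
      Real.rpow_le_rpow (hΦpos t ht).le (hΦdecay t ht) hθ.1.le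
    rw [Real.mul_rpow hK (Real.rpow_nonneg h1t _), ← Real.rpow_mul h1t] at h1
    have he : (-(1 / (1 - 2 * θ))) * θ = -(θ / (1 - 2 * θ)) := by ring
    rwa [he] at h1
  calc Φ t ^ θ / c ≤ (K ^ θ * (1 + t) ^ (-(θ / (1 - 2 * θ)))) / c := by gcongr
    _ = (K ^ θ / c) * (1 + t) ^ (-(θ / (1 - 2 * θ))) := by ring
end
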